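/- Let n ≥ 2 and let f be an (n-1)-times differentiable function on [a,b] with f⁽ⁱ⁾ ≥ 0 for i = 0,…,n-2. Let g be a strictly positive, continuous, increasing function on [a,b], and let α ≤ n be a real number such that f⁽ⁿ⁻¹⁾ ≥ (n!/(n-1))·f·‖g‖_∞^{n-α} on [a,b], where ‖g‖_∞ := sup{g(x) : x ∈ [a,b]}. Set K := g(a)^{α} if α ≥ 0 and K := g(b)^{α} if α < 0. Then (b-a)·f(a)ⁿ·K + (∫_a^b f·g)ⁿ ≤ ∫_a^b fⁿ·g^{α}. -/

import Mathlib

open Set intervalIntegral MeasureTheory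

private lemma monoHelp {a b : ℝ} {φ ψ : ℝ → ℝ} (hc : ContinuousOn φ (Set.Icc a b))
    (hd : ∀ x ∈ Set.Ioo a b, HasDerivAt φ (ψ x) x)
    (h0 : ∀ x ∈ Set.Ioo a b, 0 ≤ ψ x) : MonotoneOn φ (Set.Icc a b) := by
  apply monotoneOn_of_deriv_nonneg (convex_Icc a b) hc
  · rw [interior_Icc]
    exact fun x hx => ((hd x hx).differentiableAt).differentiableWithinAt
  · rw [interior_Icc]
    intro x hx
    rw [(hd x hx).deriv]
    exact h0 x hx

private lemma ftcHelp {a b : ℝ} {h : ℝ → ℝ} (hc : ContinuousOn h (Set.Icc a b))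
    {x : ℝ} (hx : x ∈ Set.Ioo a b) :
    HasDerivAt (fun u => ∫ t in a..u, h t) (h x) x := by
  apply intervalIntegral.integral_hasDerivAt_right
  · apply ContinuousOn.intervalIntegrable
    apply hc.mono
    rw [Set.uIcc_of_le hx.1.le]
    exact Set.Icc_subset_Icc le_rfl hx.2.le
  · exact (hc.mono Set.Ioo_subset_Icc_self).stronglyMeasurableAtFilter isOpen_Ioo x hx
  · exact hc.continuousAt (Icc_mem_nhds hx.1 hx.2)

private lemma primCont {a b : ℝ} {h : ℝ → ℝ} (hab : a ≤ b) (hc : ContinuousOn h (Set.Icc a b)) :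
    ContinuousOn (fun u => ∫ t in a..u, h t) (Set.Icc a b) := by
  have h1 : IntegrableOn h (Set.uIcc a b) volume := by
    rw [Set.uIcc_of_le hab]; exact hc.integrableOn_Icc
  have := intervalIntegral.continuousOn_primitive_interval h1
  rwa [Set.uIcc_of_le hab] at this

private lemma primNonneg {a b : ℝ} {h : ℝ → ℝ} (h0 : ∀ t ∈ Set.Icc a b, 0 ≤ h t)
    {x : ℝ} (hx : x ∈ Set.Icc a b) : 0 ≤ ∫ t in a..x, h t := by
  apply intervalIntegral.integral_nonneg hx.1
  exact fun u hu => h0 u ⟨hu.1, hu.2.trans hx.2⟩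

theorem stmt15 (a b : ℝ) (hab : a < b) (n : ℕ) (hn : 2 ≤ n)
    (f : ℝ → ℝ)
    (hf_diff : ∀ i < n - 1,
      DifferentiableOn ℝ (iteratedDerivWithin i f (Set.Icc a b)) (Set.Icc a b))
    (hf_nonneg : ∀ i ≤ n - 2, ∀ x ∈ Set.Icc a b,
      0 ≤ iteratedDerivWithin i f (Set.Icc a b) x)
    (g : ℝ → ℝ) (hg_pos : ∀ x ∈ Set.Icc a b, 0 < g x)
    (hg_cont : ContinuousOn g (Set.Icc a b))
    (hg_mono : MonotoneOn g (Set.Icc a b))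
    (α : ℝ) (hα : α ≤ (n : ℝ))
    (hgrowth : ∀ x ∈ Set.Icc a b,
      ((n.factorial : ℝ) / ((n : ℝ) - 1)) * f x *
          sSup (g '' Set.Icc a b) ^ ((n : ℝ) - α) ≤
        iteratedDerivWithin (n - 1) f (Set.Icc a b) x) :
    (b - a) * f a ^ n * (if 0 ≤ α then g a ^ α else g b ^ α) +
      (∫ x in a..b, f x * g x) ^ n ≤
    ∫ x in a..b, f x ^ n * g x ^ α := by
  have haI : a ∈ Set.Icc a b := Set.left_mem_Icc.2 hab.le
  have hbI : b ∈ Set.Icc a b := Set.right_mem_Icc.2 hab.le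
  -- the sup of g is g b
  have hM : sSup (g '' Set.Icc a b) = g b := by
    apply IsGreatest.csSup_eq
    constructor
    · exact ⟨b, hbI, rfl⟩
    · rintro y ⟨x, hx, rfl⟩
      exact hg_mono hx hbI hx.2
  simp only [hM] at hgrowth
  set C : ℝ := g b ^ ((n : ℝ) - α) with hCdef
  have hC0 : 0 < C := Real.rpow_pos_of_pos (hg_pos b hbI) _
  have hfrac : 0 < (n.factorial : ℝ) / ((n : ℝ) - 1) := by
    apply div_pos (by exact_mod_cast n.factorial_pos)
    have : (2 : ℝ) ≤ (n : ℝ) := by exact_mod_cast hn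
    linarith
  -- basic facts about f
  have hf0 : ∀ x ∈ Set.Icc a b, 0 ≤ f x := by
    intro x hx
    have := hf_nonneg 0 (by omega) x hx
    rwa [iteratedDerivWithin_zero] at this
  have hfc : ContinuousOn f (Set.Icc a b) := by
    have := (hf_diff 0 (by omega)).continuousOn
    rwa [iteratedDerivWithin_zero] at this
  have hder : ∀ i, i < n - 1 → ∀ x ∈ Set.Ioo a b,
      HasDerivAt (iteratedDerivWithin i f (Set.Icc a b))
        (iteratedDerivWithin (i + 1) f (Set.Icc a b) x) x := by
    intro i hi x hx
    have hxI : x ∈ Set.Icc a b := Set.Ioo_subset_Icc_self hx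
    have h1 : HasDerivWithinAt (iteratedDerivWithin i f (Set.Icc a b))
        (derivWithin (iteratedDerivWithin i f (Set.Icc a b)) (Set.Icc a b) x) (Set.Icc a b) x :=
      ((hf_diff i hi) x hxI).hasDerivWithinAt
    rw [iteratedDerivWithin_succ]
    exact h1.hasDerivAt (Icc_mem_nhds hx.1 hx.2)
  have hder0 : ∀ x ∈ Set.Ioo a b,
      HasDerivAt f (iteratedDerivWithin 1 f (Set.Icc a b) x) x := by
    intro x hx
    have := hder 0 (by omega) x hx
    rwa [iteratedDerivWithin_zero] at this
  have hD1 : ∀ x ∈ Set.Icc a b, 0 ≤ iteratedDerivWithin 1 f (Set.Icc a b) x := by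
    intro x hx
    rcases lt_or_ge 2 n with h3 | h2
    · exact hf_nonneg 1 (by omega) x hx
    · have hn2 : n = 2 := by omega
      have hg1 := hgrowth x hx
      have e : n - 1 = 1 := by omega
      rw [e] at hg1
      have h0 : 0 ≤ (n.factorial : ℝ) / ((n : ℝ) - 1) * f x * C :=
        mul_nonneg (mul_nonneg hfrac.le (hf0 x hx)) hC0.le
      linarith
  have hfmono : MonotoneOn f (Set.Icc a b) :=
    monoHelp hfc hder0 (fun x hx => hD1 x (Set.Ioo_subset_Icc_self hx))
  -- the primitive F of f
  have hFc : ContinuousOn (fun u => ∫ t in a..u, f t) (Set.Icc a b) := primCont hab.le hfc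
  have hFd : ∀ x ∈ Set.Ioo a b, HasDerivAt (fun u => ∫ t in a..u, f t) (f x) x :=
    fun x hx => ftcHelp hfc hx
  have hF0 : ∀ x ∈ Set.Icc a b, 0 ≤ ∫ t in a..x, f t := fun x hx => primNonneg hf0 hx
  have hFa : (∫ t in a..a, f t) = 0 := intervalIntegral.integral_same
  -- the chain of inequalities
  have chain : ∀ k, 2 ≤ k → k ≤ n - 1 → ∀ x ∈ Set.Icc a b,
      (n.factorial : ℝ) / (((n : ℝ) - 1) * ((k - 1).factorial : ℝ)) * C * (∫ t in a..x, f t) ^ (k - 1)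
        ≤ iteratedDerivWithin (n - k) f (Set.Icc a b) x * f x ^ (k - 2) := by
    intro k hk
    induction k, hk using Nat.le_induction with
    | base =>
      intro hkn x hx
      have hn2 : n - 2 < n - 1 := by omega
      have hmono : MonotoneOn (fun y => iteratedDerivWithin (n - 2) f (Set.Icc a b) y
          - (n.factorial : ℝ) / ((n : ℝ) - 1) * C * (∫ t in a..y, f t)) (Set.Icc a b) := by
        apply monoHelp (ψ := fun y => iteratedDerivWithin (n - 1) f (Set.Icc a b) y
          - (n.factorial : ℝ) / ((n : ℝ) - 1) * C * f y)
        · exact ((hf_diff _ hn2).continuousOn).sub (continuousOn_const.mul hFc)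
        · intro y hy
          have h1 := hder (n - 2) hn2 y hy
          have e : n - 2 + 1 = n - 1 := by omega
          rw [e] at h1
          exact h1.sub ((hFd y hy).const_mul _)
        · intro y hy
          have hg1 := hgrowth y (Set.Ioo_subset_Icc_self hy)
          nlinarith [hg1]
      have h0 := hmono haI hx hx.1
      simp only [hFa, mul_zero, sub_zero] at h0
      have hTa := hf_nonneg (n - 2) le_rfl a haI
      simp only [show (2:ℕ) - 1 = 1 by norm_num, show (2:ℕ) - 2 = 0 by norm_num, pow_one,
        pow_zero, mul_one, Nat.factorial_one, Nat.cast_one]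
      linarith
    | succ k hk ih =>
      intro hkn x hx
      have ih' := ih (by omega)
      have hidx : n - (k + 1) < n - 1 := by omega
      have hidx2 : n - (k + 1) ≤ n - 2 := by omega
      have hmono : MonotoneOn (fun y =>
          iteratedDerivWithin (n - (k + 1)) f (Set.Icc a b) y * f y ^ (k - 1)
          - (n.factorial : ℝ) / (((n : ℝ) - 1) * (k.factorial : ℝ)) * C
              * (∫ t in a..y, f t) ^ k) (Set.Icc a b) := by
        apply monoHelp (ψ := fun y =>
          (iteratedDerivWithin (n - k) f (Set.Icc a b) y * f y ^ (k - 1)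
            + iteratedDerivWithin (n - (k + 1)) f (Set.Icc a b) y
              * (((k - 1 : ℕ) : ℝ) * f y ^ (k - 1 - 1) * iteratedDerivWithin 1 f (Set.Icc a b) y))
          - (n.factorial : ℝ) / (((n : ℝ) - 1) * (k.factorial : ℝ)) * C
              * ((k : ℝ) * (∫ t in a..y, f t) ^ (k - 1) * f y))
        · exact (((hf_diff _ hidx).continuousOn).mul (hfc.pow _)).sub
            (continuousOn_const.mul (hFc.pow _))
        · intro y hy
          have h1 := hder (n - (k + 1)) hidx y hy
          have e : n - (k + 1) + 1 = n - k := by omega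
          rw [e] at h1
          exact (h1.mul ((hder0 y hy).pow (k - 1))).sub (((hFd y hy).pow k).const_mul _)
        · intro y hy
          have hyI := Set.Ioo_subset_Icc_self hy
          have hIH := ih' y hyI
          have hfy := hf0 y hyI
          have h6 := mul_le_mul_of_nonneg_right hIH hfy
          have e2 : iteratedDerivWithin (n - k) f (Set.Icc a b) y * f y ^ (k - 2) * f y
              = iteratedDerivWithin (n - k) f (Set.Icc a b) y * f y ^ (k - 1) := by
            rw [mul_assoc]
            congr 1
            rw [← pow_succ]
            congr 1
            omega
          rw [e2] at h6
          have hkf : (k.factorial : ℝ) = (k : ℝ) * ((k - 1).factorial : ℝ) := by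
            rw [← Nat.cast_mul]
            congr 1
            conv_lhs => rw [show k = (k - 1) + 1 by omega]
            rw [Nat.factorial_succ]
            congr 1
            omega
          have h7 : 0 ≤ iteratedDerivWithin (n - (k + 1)) f (Set.Icc a b) y
              * (((k - 1 : ℕ) : ℝ) * f y ^ (k - 1 - 1) * iteratedDerivWithin 1 f (Set.Icc a b) y) := by
            apply mul_nonneg (hf_nonneg _ hidx2 y hyI)
            exact mul_nonneg (mul_nonneg (Nat.cast_nonneg _) (pow_nonneg hfy _)) (hD1 y hyI)
          have hne1 : ((n : ℝ) - 1) ≠ 0 := by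
            have : (2 : ℝ) ≤ (n : ℝ) := by exact_mod_cast hn
            linarith
          have hne2 : ((k - 1).factorial : ℝ) ≠ 0 := by
            exact_mod_cast (k - 1).factorial_ne_zero
          have hne3 : (k : ℝ) ≠ 0 := by
            have : 0 < k := by omega
            exact_mod_cast this.ne'
          have h8 : (n.factorial : ℝ) / (((n : ℝ) - 1) * (k.factorial : ℝ)) * C
              * ((k : ℝ) * (∫ t in a..y, f t) ^ (k - 1) * f y)
              = (n.factorial : ℝ) / (((n : ℝ) - 1) * ((k - 1).factorial : ℝ)) * C
              * (∫ t in a..y, f t) ^ (k - 1) * f y := by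
            rw [hkf]
            field_simp
          rw [h8]
          linarith
      have h0 := hmono haI hx hx.1
      simp only [hFa] at h0
      rw [zero_pow (by omega : k ≠ 0), mul_zero, sub_zero] at h0
      have hTa : 0 ≤ iteratedDerivWithin (n - (k + 1)) f (Set.Icc a b) a * f a ^ (k - 1) :=
        mul_nonneg (hf_nonneg _ hidx2 a haI) (pow_nonneg (hf0 a haI) _)
      have e5 : k + 1 - 1 = k := by omega
      have e6 : k + 1 - 2 = k - 1 := by omega
      rw [e5, e6]
      linarith
  -- (★★)
  have star2 : ∀ x ∈ Set.Icc a b,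
      f a ^ (n - 1) + (n : ℝ) * C * (∫ t in a..x, f t) ^ (n - 1) ≤ f x ^ (n - 1) := by
    have hmono : MonotoneOn (fun y => f y ^ (n - 1)
        - (n : ℝ) * C * (∫ t in a..y, f t) ^ (n - 1)) (Set.Icc a b) := by
      apply monoHelp (ψ := fun y =>
        ((n - 1 : ℕ) : ℝ) * f y ^ (n - 1 - 1) * iteratedDerivWithin 1 f (Set.Icc a b) y
        - (n : ℝ) * C * (((n - 1 : ℕ) : ℝ) * (∫ t in a..y, f t) ^ (n - 1 - 1) * f y))
      · exact (hfc.pow _).sub (continuousOn_const.mul (hFc.pow _))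
      · intro y hy
        exact ((hder0 y hy).pow (n - 1)).sub (((hFd y hy).pow (n - 1)).const_mul ((n : ℝ) * C))
      · intro y hy
        have hyI := Set.Ioo_subset_Icc_self hy
        have hkey2 : (n : ℝ) * C * (∫ t in a..y, f t) ^ (n - 2) * f y
            ≤ f y ^ (n - 2) * iteratedDerivWithin 1 f (Set.Icc a b) y := by
          rcases eq_or_lt_of_le hn with h2 | h3
          · have hn2 : n = 2 := h2.symm
            subst hn2
            have hg1 := hgrowth y hyI
            norm_num [Nat.factorial] at hg1 ⊢
            nlinarith [hg1]
          · have hch := chain (n - 1) (by omega) le_rfl y hyI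
            have e1 : n - (n - 1) = 1 := by omega
            have e2 : n - 1 - 1 = n - 2 := by omega
            have e3 : n - 1 - 2 = n - 3 := by omega
            rw [e1, e2, e3] at hch
            have hne1 : ((n : ℝ) - 1) ≠ 0 := by
              have : (2 : ℝ) ≤ (n : ℝ) := by exact_mod_cast hn
              linarith
            have ecoef : (n.factorial : ℝ) / (((n : ℝ) - 1) * ((n - 2).factorial : ℝ))
                = (n : ℝ) := by
              have hf1 : (n.factorial : ℝ) = (n : ℝ) * ((n - 1).factorial : ℝ) := by
                rw [← Nat.cast_mul]
                congr 1
                conv_lhs => rw [show n = (n - 1) + 1 by omega]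
                rw [Nat.factorial_succ]
                congr 1
                omega
              have hf2 : ((n - 1).factorial : ℝ) = ((n : ℝ) - 1) * ((n - 2).factorial : ℝ) := by
                rw [show ((n : ℝ) - 1) = ((n - 1 : ℕ) : ℝ) by
                  rw [Nat.cast_sub (by omega : 1 ≤ n)]; simp]
                rw [← Nat.cast_mul]
                congr 1
                conv_lhs => rw [show n - 1 = (n - 2) + 1 by omega]
                rw [Nat.factorial_succ]
                congr 1
                omega
              have hne2 : ((n - 2).factorial : ℝ) ≠ 0 := by
                exact_mod_cast (n - 2).factorial_ne_zero
              rw [hf1, hf2]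
              field_simp
            rw [ecoef] at hch
            have hmul := mul_le_mul_of_nonneg_right hch (hf0 y hyI)
            have e4 : f y ^ (n - 3) * f y = f y ^ (n - 2) := by
              rw [← pow_succ]; congr 1; omega
            calc (n : ℝ) * C * (∫ t in a..y, f t) ^ (n - 2) * f y
                ≤ iteratedDerivWithin 1 f (Set.Icc a b) y * f y ^ (n - 3) * f y := hmul
              _ = f y ^ (n - 2) * iteratedDerivWithin 1 f (Set.Icc a b) y := by
                  rw [mul_assoc, e4]; ring
        have e : n - 1 - 1 = n - 2 := by omega
        rw [e]
        have hprod := mul_le_mul_of_nonneg_left hkey2 (Nat.cast_nonneg (n - 1) : (0:ℝ) ≤ ((n - 1 : ℕ) : ℝ))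
        nlinarith [hprod]
    intro x hx
    have h0 := hmono haI hx hx.1
    simp only [hFa] at h0
    rw [zero_pow (by omega : n - 1 ≠ 0), mul_zero, sub_zero] at h0
    linarith
  -- (★)
  have star : ∀ x ∈ Set.Icc a b,
      f a ^ n + (n : ℝ) * C * f x * (∫ t in a..x, f t) ^ (n - 1) ≤ f x ^ n := by
    intro x hx
    have h1 := star2 x hx
    have hfx := hf0 x hx
    have h2 : f x * (f a ^ (n - 1) + (n : ℝ) * C * (∫ t in a..x, f t) ^ (n - 1))
        ≤ f x * f x ^ (n - 1) := mul_le_mul_of_nonneg_left h1 hfx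
    have h3 : f x * f x ^ (n - 1) = f x ^ n := by
      rw [← pow_succ']; congr 1; omega
    have h4 : f a ^ n ≤ f x * f a ^ (n - 1) := by
      have e : f a ^ n = f a * f a ^ (n - 1) := by rw [← pow_succ']; congr 1; omega
      rw [e]
      exact mul_le_mul_of_nonneg_right (hfmono haI hx hx.1) (pow_nonneg (hf0 a haI) _)
    rw [mul_add, h3] at h2
    have e2 : f x * ((n : ℝ) * C * (∫ t in a..x, f t) ^ (n - 1))
        = (n : ℝ) * C * f x * (∫ t in a..x, f t) ^ (n - 1) := by ring
    rw [e2] at h2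
    linarith
  -- facts about P
  have hgC : ContinuousOn (fun t => f t * g t) (Set.Icc a b) := hfc.mul hg_cont
  have hPc : ContinuousOn (fun u => ∫ t in a..u, f t * g t) (Set.Icc a b) := primCont hab.le hgC
  have hPd : ∀ x ∈ Set.Ioo a b,
      HasDerivAt (fun u => ∫ t in a..u, f t * g t) (f x * g x) x := fun x hx => ftcHelp hgC hx
  have hP0 : ∀ x ∈ Set.Icc a b, 0 ≤ ∫ t in a..x, f t * g t := by
    intro x hx
    exact primNonneg (fun t ht => mul_nonneg (hf0 t ht) (hg_pos t ht).le) hx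
  have hPa : (∫ t in a..a, f t * g t) = 0 := intervalIntegral.integral_same
  have hPle : ∀ x ∈ Set.Icc a b, (∫ t in a..x, f t * g t) ≤ g x * ∫ t in a..x, f t := by
    intro x hx
    have hsub : Set.Icc a x ⊆ Set.Icc a b := Set.Icc_subset_Icc le_rfl hx.2
    have hint1 : IntervalIntegrable (fun t => f t * g t) volume a x := by
      apply ContinuousOn.intervalIntegrable
      rw [Set.uIcc_of_le hx.1]
      exact hgC.mono hsub
    have hint2 : IntervalIntegrable (fun t => f t * g x) volume a x := by
      apply ContinuousOn.intervalIntegrable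
      rw [Set.uIcc_of_le hx.1]
      exact (hfc.mono hsub).mul continuousOn_const
    have hmono := intervalIntegral.integral_mono_on hx.1 hint1 hint2
      (fun t ht => mul_le_mul_of_nonneg_left (hg_mono (hsub ht) hx ht.2) (hf0 t (hsub ht)))
    rw [intervalIntegral.integral_mul_const] at hmono
    calc (∫ t in a..x, f t * g t) ≤ (∫ t in a..x, f t) * g x := hmono
      _ = g x * ∫ t in a..x, f t := mul_comm _ _
  -- comparing powers of g
  have hgb : ∀ x ∈ Set.Icc a b, g x ≤ g b := fun x hx => hg_mono hx hbI hx.2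
  have hgn : ∀ x ∈ Set.Icc a b, g x ^ n ≤ C * g x ^ α := by
    intro x hx
    have hgx := hg_pos x hx
    have h1 : g x ^ (n : ℝ) = g x ^ ((n : ℝ) - α) * g x ^ α := by
      rw [← Real.rpow_add hgx]; ring_nf
    have h2 : g x ^ ((n : ℝ) - α) ≤ C := by
      rw [hCdef]
      exact Real.rpow_le_rpow hgx.le (hgb x hx) (by linarith)
    calc g x ^ n = g x ^ (n : ℝ) := (Real.rpow_natCast _ n).symm
      _ = g x ^ ((n : ℝ) - α) * g x ^ α := h1
      _ ≤ C * g x ^ α :=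
        mul_le_mul_of_nonneg_right h2 (Real.rpow_nonneg hgx.le α)
  have hKle : ∀ x ∈ Set.Icc a b,
      (if 0 ≤ α then g a ^ α else g b ^ α) ≤ g x ^ α := by
    intro x hx
    split_ifs with h
    · exact Real.rpow_le_rpow (hg_pos a haI).le (hg_mono haI hx hx.1) h
    · exact Real.rpow_le_rpow_of_nonpos (hg_pos x hx) (hg_mono hx hbI hx.2) (le_of_not_ge h)
  -- key pointwise inequality
  have key : ∀ x ∈ Set.Ioo a b,
      f a ^ n * (if 0 ≤ α then g a ^ α else g b ^ α)
        + (n : ℝ) * (∫ t in a..x, f t * g t) ^ (n - 1) * (f x * g x)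
      ≤ f x ^ n * g x ^ α := by
    intro x hx
    have hxI := Set.Ioo_subset_Icc_self hx
    have hgx := hg_pos x hxI
    have hfx := hf0 x hxI
    have h1 : (∫ t in a..x, f t * g t) ^ (n - 1) ≤ (g x * ∫ t in a..x, f t) ^ (n - 1) :=
      pow_le_pow_left₀ (hP0 x hxI) (hPle x hxI) _
    have h2 : (n : ℝ) * (∫ t in a..x, f t * g t) ^ (n - 1) * (f x * g x)
        ≤ (n : ℝ) * (g x * ∫ t in a..x, f t) ^ (n - 1) * (f x * g x) :=
      mul_le_mul_of_nonneg_right (mul_le_mul_of_nonneg_left h1 (by positivity))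
        (mul_nonneg hfx hgx.le)
    have e1 : g x ^ (n - 1) * g x = g x ^ n := by rw [← pow_succ]; congr 1; omega
    have h3 : (n : ℝ) * (g x * ∫ t in a..x, f t) ^ (n - 1) * (f x * g x)
        = g x ^ n * ((n : ℝ) * f x * (∫ t in a..x, f t) ^ (n - 1)) := by
      rw [mul_pow, ← e1]; ring
    have h4 : g x ^ n * ((n : ℝ) * f x * (∫ t in a..x, f t) ^ (n - 1))
        ≤ (C * g x ^ α) * ((n : ℝ) * f x * (∫ t in a..x, f t) ^ (n - 1)) := by
      apply mul_le_mul_of_nonneg_right (hgn x hxI)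
      exact mul_nonneg (mul_nonneg (by positivity) hfx) (pow_nonneg (hF0 x hxI) _)
    have h6 := star x hxI
    have h7 : (C * g x ^ α) * ((n : ℝ) * f x * (∫ t in a..x, f t) ^ (n - 1))
        = ((n : ℝ) * C * f x * (∫ t in a..x, f t) ^ (n - 1)) * g x ^ α := by ring
    have h8 : ((n : ℝ) * C * f x * (∫ t in a..x, f t) ^ (n - 1)) * g x ^ α
        ≤ (f x ^ n - f a ^ n) * g x ^ α :=
      mul_le_mul_of_nonneg_right (by linarith) (Real.rpow_nonneg hgx.le α)
    have h9 : f a ^ n * (if 0 ≤ α then g a ^ α else g b ^ α) ≤ f a ^ n * g x ^ α :=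
      mul_le_mul_of_nonneg_left (hKle x hxI) (pow_nonneg (hf0 a haI) n)
    have e3 : (f x ^ n - f a ^ n) * g x ^ α = f x ^ n * g x ^ α - f a ^ n * g x ^ α := by ring
    linarith
  -- final monotone function
  have hQint : ContinuousOn (fun t => f t ^ n * g t ^ α) (Set.Icc a b) :=
    (hfc.pow n).mul (hg_cont.rpow_const (fun x hx => Or.inl (hg_pos x hx).ne'))
  have hQc : ContinuousOn (fun u => ∫ t in a..u, f t ^ n * g t ^ α) (Set.Icc a b) :=
    primCont hab.le hQint
  have hQd : ∀ x ∈ Set.Ioo a b,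
      HasDerivAt (fun u => ∫ t in a..u, f t ^ n * g t ^ α) (f x ^ n * g x ^ α) x :=
    fun x hx => ftcHelp hQint hx
  have hQa : (∫ t in a..a, f t ^ n * g t ^ α) = 0 := intervalIntegral.integral_same
  have hH : MonotoneOn (fun y => (∫ t in a..y, f t ^ n * g t ^ α)
      - (y - a) * (f a ^ n * (if 0 ≤ α then g a ^ α else g b ^ α))
      - (∫ t in a..y, f t * g t) ^ n) (Set.Icc a b) := by
    apply monoHelp (ψ := fun y => f y ^ n * g y ^ α
      - 1 * (f a ^ n * (if 0 ≤ α then g a ^ α else g b ^ α))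
      - (n : ℝ) * (∫ t in a..y, f t * g t) ^ (n - 1) * (f y * g y))
    · apply ContinuousOn.sub
      apply ContinuousOn.sub hQc
      · exact ((continuousOn_id.sub continuousOn_const).mul continuousOn_const)
      · exact hPc.pow n
    · intro y hy
      exact ((hQd y hy).sub
        (((hasDerivAt_id y).sub_const a).mul_const _)).sub ((hPd y hy).pow n)
    · intro y hy
      have := key y hy
      simp only [one_mul]
      linarith
  have hfin := hH haI hbI hab.le
  simp only [hQa, hPa, hFa] at hfin
  rw [sub_self, zero_mul, zero_pow (by omega : n ≠ 0)] at hfin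
  have e : (b - a) * f a ^ n * (if 0 ≤ α then g a ^ α else g b ^ α)
      = (b - a) * (f a ^ n * (if 0 ≤ α then g a ^ α else g b ^ α)) := by ring
  rw [e]
  linarith
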